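/- Let Z be an isotropic measure on S^{n-1} with centroid at the origin, Z̄ the lifted isotropic measure on S^n, φ : R → (0,∞) the increasing transport map with ∫_0^{φ(t)} e^{−s} ds = (1/√π)∫_{−∞}^t e^{−s^2} ds, and T : R^{n+1} → R^{n+1} defined by Ty = ∫_{S^n} w φ(y·w) dZ̄(w). Then T(R^{n+1}) is contained in the open cone C = ∪_{r>0} (−r√n int(Z_∞)) × {r}. -/

import Mathlib

open MeasureTheory Set
open scoped Pointwise

/-- The support of a measure on `ℝ^n`. -/
def msupp {n : ℕ} (Z : Measure (EuclideanSpace ℝ (Fin n))) :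
    Set (EuclideanSpace ℝ (Fin n)) :=
  {x | ∀ r > (0 : ℝ), Z (Metric.ball x r) ≠ 0}

variable {n : ℕ} (Z : Measure (EuclideanSpace ℝ (Fin n)))

lemma msupp_compl_null : Z (msupp Z)ᶜ = 0 := by
  apply measure_null_of_locally_null
  intro x hx
  simp only [msupp, mem_compl_iff, mem_setOf_eq, not_forall] at hx
  obtain ⟨r, hr, hZr⟩ := hx
  rw [not_ne_iff] at hZr
  exact ⟨Metric.ball x r, mem_nhdsWithin_of_mem_nhds (Metric.ball_mem_nhds x hr), hZr⟩

lemma ae_mem_msupp : ∀ᵐ u ∂Z, u ∈ msupp Z :=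
  (ae_iff.2 (by exact msupp_compl_null Z))

lemma integrable_of_continuous [IsFiniteMeasure Z]
    (hsph : Z (Metric.sphere (0 : EuclideanSpace ℝ (Fin n)) 1)ᶜ = 0)
    {F : Type*} [NormedAddCommGroup F] [NormedSpace ℝ F]
    (g : EuclideanSpace ℝ (Fin n) → F) (hg : Continuous g) : Integrable g Z := by
  have hres : Z.restrict (Metric.sphere (0 : EuclideanSpace ℝ (Fin n)) 1) = Z := by
    apply Measure.restrict_eq_self_of_ae_mem
    rw [ae_iff]
    exact hsph
  rw [← hres]
  exact (hg.continuousOn.integrableOn_compact (isCompact_sphere 0 1))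

lemma eq_zero_of_inner_const_on_msupp [IsFiniteMeasure Z]
    (hsph : Z (Metric.sphere (0 : EuclideanSpace ℝ (Fin n)) 1)ᶜ = 0)
    (hiso : ∀ x : EuclideanSpace ℝ (Fin n),
      ∫ u, (inner ℝ x u : ℝ) ^ 2 ∂Z = ‖x‖ ^ 2)
    (hcent : ∫ u, u ∂Z = (0 : EuclideanSpace ℝ (Fin n)))
    (hZne : Z ≠ 0) (x : EuclideanSpace ℝ (Fin n)) (c : ℝ)
    (h : ∀ u ∈ msupp Z, (inner ℝ x u : ℝ) = c) : x = 0 := by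
  have hid : Integrable (fun u : EuclideanSpace ℝ (Fin n) => u) Z :=
    integrable_of_continuous Z hsph _ continuous_id
  have hae : ∀ᵐ u ∂Z, (inner ℝ x u : ℝ) = c := (ae_mem_msupp Z).mono h
  have h2 : ∫ u, (inner ℝ x u : ℝ) ∂Z = 0 := by
    rw [integral_inner hid x, hcent, inner_zero_right]
  have h1 : ∫ u, (inner ℝ x u : ℝ) ∂Z = (Z univ).toReal • c := by
    rw [integral_congr_ae (g := fun _ => c) hae, integral_const, measureReal_def]
  have hpos : 0 < (Z univ).toReal :=
    ENNReal.toReal_pos (by simpa using (Measure.measure_univ_pos.mpr hZne).ne')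
      (measure_ne_top Z univ)
  have hc : c = 0 := by
    rw [h1, smul_eq_mul] at h2
    exact (mul_eq_zero.1 h2).resolve_left hpos.ne'
  have hsq : ∫ u, (inner ℝ x u : ℝ) ^ 2 ∂Z = 0 := by
    rw [integral_congr_ae (g := fun _ => (0:ℝ)) (hae.mono fun u hu => by rw [hu, hc]; ring)]
    simp
  have := hiso x
  rw [hsq] at this
  have : ‖x‖ = 0 := by nlinarith [norm_nonneg x]
  simpa using this

lemma barycenter_mem_interior [IsFiniteMeasure Z] (hn : 0 < n)
    (hsph : Z (Metric.sphere (0 : EuclideanSpace ℝ (Fin n)) 1)ᶜ = 0)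
    (hiso : ∀ x : EuclideanSpace ℝ (Fin n),
      ∫ u, (inner ℝ x u : ℝ) ^ 2 ∂Z = ‖x‖ ^ 2)
    (hcent : ∫ u, u ∂Z = (0 : EuclideanSpace ℝ (Fin n)))
    (ψ : EuclideanSpace ℝ (Fin n) → ℝ) (hψc : Continuous ψ) (hψpos : ∀ u, 0 < ψ u) :
    (∫ u, ψ u ∂Z)⁻¹ • (∫ u, ψ u • u ∂Z) ∈ interior (convexHull ℝ (msupp Z)) := by
  classical
  have hZne : Z ≠ 0 := by
    intro h
    have hx := hiso (EuclideanSpace.single ⟨0, hn⟩ 1)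
    rw [h] at hx
    simp [EuclideanSpace.norm_single] at hx
  have hψint : Integrable ψ Z := integrable_of_continuous Z hsph ψ hψc
  have hVint : Integrable (fun u => ψ u • u) Z :=
    integrable_of_continuous Z hsph _ (hψc.smul continuous_id)
  set I : ℝ := ∫ u, ψ u ∂Z with hIdef
  set V : EuclideanSpace ℝ (Fin n) := ∫ u, ψ u • u ∂Z with hVdef
  have hI : 0 < I := by
    rw [hIdef, integral_pos_iff_support_of_nonneg (fun u => (hψpos u).le) hψint]
    have : Function.support ψ = univ := by
      ext u; simp [Function.mem_support, (hψpos u).ne']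
    rw [this]
    exact Measure.measure_univ_pos.mpr hZne
  set K : Set (EuclideanSpace ℝ (Fin n)) := convexHull ℝ (msupp Z) with hKdef
  have hKconv : Convex ℝ K := convex_convexHull ℝ _
  have hne : (msupp Z).Nonempty := by
    rw [nonempty_iff_ne_empty]
    intro h
    apply hZne
    have : Z univ = 0 := by
      have := msupp_compl_null Z
      rwa [h, compl_empty] at this
    ext s hs
    simp [measure_mono_null (subset_univ s) this]
  have hconst : ∀ (x : EuclideanSpace ℝ (Fin n)) (c : ℝ),
      (∀ u ∈ msupp Z, (inner ℝ x u : ℝ) = c) → x = 0 :=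
    fun x c h => eq_zero_of_inner_const_on_msupp Z hsph hiso hcent hZne x c h
  have haff : affineSpan ℝ (msupp Z) = ⊤ := by
    rw [AffineSubspace.affineSpan_eq_top_iff_vectorSpan_eq_top_of_nonempty ℝ (EuclideanSpace ℝ (Fin n)) (EuclideanSpace ℝ (Fin n)) hne]
    by_contra hW
    obtain ⟨p, hp⟩ := hne
    have hWo : (vectorSpan ℝ (msupp Z))ᗮ ≠ ⊥ :=
      fun h => hW (Submodule.orthogonal_eq_bot_iff.mp h)
    obtain ⟨x, hxW, hx0⟩ := Submodule.ne_bot_iff _ |>.mp hWo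
    apply hx0
    apply hconst x (inner ℝ x p)
    intro u hu
    have hmem : u - p ∈ vectorSpan ℝ (msupp Z) := by
      have := vsub_mem_vectorSpan ℝ hu hp
      simpa using this
    have := (Submodule.mem_orthogonal _ x).1 hxW _ hmem
    rw [real_inner_comm] at this
    rw [inner_sub_right] at this
    linarith
  have hint : (interior K).Nonempty := by
    rw [hKconv.interior_nonempty_iff_affineSpan_eq_top]
    rw [hKdef, affineSpan_convexHull]
    exact haff
  obtain ⟨z, hz⟩ := hint
  by_contra hb
  set b : EuclideanSpace ℝ (Fin n) := I⁻¹ • V with hbdef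
  obtain ⟨f, hf⟩ := geometric_hahn_banach_open_point (hKconv.interior) isOpen_interior hb
  have hfle : ∀ u ∈ msupp Z, f u ≤ f b := by
    intro u hu
    have key : ∀ t ∈ Ioo (0:ℝ) 1, (1-t) * f u + t * f z ≤ f b := by
      intro t ht
      have hmem : (1-t) • u + t • z ∈ interior K :=
        hKconv.combo_self_interior_mem_interior
          ((subset_convexHull ℝ _).trans (by rw [hKdef]) hu) hz
          (by linarith [ht.2]) ht.1 (by ring)
      have := (hf _ hmem).le
      rw [map_add, f.map_smul, f.map_smul] at this
      simpa [smul_eq_mul] using this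
    have htend : Filter.Tendsto (fun t : ℝ => (1-t) * f u + t * f z)
        (nhdsWithin 0 (Ioi 0)) (nhds (f u)) := by
      have hc : Continuous fun t : ℝ => (1-t) * f u + t * f z :=
        ((continuous_const.sub continuous_id).mul continuous_const).add
          (continuous_id.mul continuous_const)
      have h0 := hc.tendsto 0
      simp only [sub_zero, one_mul, zero_mul, add_zero] at h0
      exact h0.mono_left nhdsWithin_le_nhds
    exact le_of_tendsto htend
      (Filter.eventually_of_mem (Ioo_mem_nhdsGT_of_mem (left_mem_Ico.mpr one_pos)) key)
  have hfVint : Integrable (fun u => ψ u * f u) Z :=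
    integrable_of_continuous Z hsph _ (hψc.mul (f.continuous))
  have hfV : ∫ u, ψ u * f u ∂Z = f V := by
    have : ∀ u, ψ u * f u = f (ψ u • u) := by intro u; simp
    simp_rw [this]
    exact ContinuousLinearMap.integral_comp_comm f hVint
  have hfb : I * f b = f V := by
    rw [hbdef, f.map_smul, smul_eq_mul, ← mul_assoc, mul_inv_cancel₀ hI.ne', one_mul]
  have hzero : ∫ u, ψ u * (f b - f u) ∂Z = 0 := by
    have hexp : ∀ u, ψ u * (f b - f u) = ψ u * f b - ψ u * f u := fun u => by ring
    simp_rw [hexp]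
    rw [integral_sub (hψint.mul_const _) hfVint, integral_mul_const, hfV, ← hIdef, hfb, sub_self]
  have hnonneg : ∀ᵐ u ∂Z, 0 ≤ ψ u * (f b - f u) := by
    filter_upwards [ae_mem_msupp Z] with u hu
    have := hfle u hu
    nlinarith [hψpos u]
  have heqz : ∀ᵐ u ∂Z, ψ u * (f b - f u) = 0 := by
    have hig : Integrable (fun u => ψ u * (f b - f u)) Z :=
      integrable_of_continuous Z hsph _ (hψc.mul ((continuous_const.sub f.continuous)))
    have := (integral_eq_zero_iff_of_nonneg_ae hnonneg hig).1 hzero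
    filter_upwards [this] with u hu using hu
  have haef : ∀ᵐ u ∂Z, f u = f b := by
    filter_upwards [heqz] with u hu
    have := hψpos u
    have h2 : f b - f u = 0 := by
      rcases mul_eq_zero.1 hu with h | h
      · exact absurd h this.ne'
      · exact h
    linarith
  have hfc : ∀ u ∈ msupp Z, f u = f b := by
    intro u hu
    by_contra hne'
    have hopen : IsOpen {v : EuclideanSpace ℝ (Fin n) | f v ≠ f b} :=
      isOpen_compl_singleton.preimage f.continuous
    have hnull : Z {v | f v ≠ f b} = 0 := by
      have := haef
      rw [ae_iff] at this
      convert this using 2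
    obtain ⟨r, hr, hball⟩ := Metric.isOpen_iff.1 hopen u hne'
    exact hu r hr (measure_mono_null hball hnull)
  have hxf : ((InnerProductSpace.toDual ℝ (EuclideanSpace ℝ (Fin n))).symm f) = 0 := by
    apply hconst _ (f b)
    intro u hu
    rw [InnerProductSpace.toDual_symm_apply]
    exact hfc u hu
  have hf0 : f = 0 := by
    have := (InnerProductSpace.toDual ℝ (EuclideanSpace ℝ (Fin n))).symm.injective
      (a₁ := f) (a₂ := 0)
    apply this
    simpa using hxf
  have := hf z hz
  rw [hf0] at this
  simp at this

/-- With `Z` isotropic on `S^{n-1}` with centroid at the origin, `Z̄` the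
lifted measure on `S^n` (so `Ty = ∫ w φ(y·w) dZ̄(w) = ((n+1)/n) ∫ s(u) φ(y·s(u)) dZ(u)`),
and `φ : ℝ → (0,∞)` the monotone transport map from the Gaussian to the exponential
distribution, the image `T(ℝ^{n+1})` lies in the open cone
`C = ∪_{r>0} (−r√n int Z_∞) × {r}`. -/
theorem range_T_subset_cone (n : ℕ) (hn : 0 < n)
    (Z : Measure (EuclideanSpace ℝ (Fin n))) [IsFiniteMeasure Z]
    (hsph : Z (Metric.sphere (0 : EuclideanSpace ℝ (Fin n)) 1)ᶜ = 0)
    (hiso : ∀ x : EuclideanSpace ℝ (Fin n),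
      ∫ u, (inner ℝ x u : ℝ) ^ 2 ∂Z = ‖x‖ ^ 2)
    (hcent : ∫ u, u ∂Z = (0 : EuclideanSpace ℝ (Fin n)))
    (s : EuclideanSpace ℝ (Fin n) → EuclideanSpace ℝ (Fin n) × ℝ)
    (hs : ∀ u, s u = (-(Real.sqrt n / Real.sqrt (n + 1)) • u, 1 / Real.sqrt (n + 1)))
    (φ : ℝ → ℝ) (hφmono : StrictMono φ) (hφpos : ∀ t, 0 < φ t) (hφc : Continuous φ)
    (hφ : ∀ t : ℝ, ∫ x in Ioc (0 : ℝ) (φ t), Real.exp (-x) =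
      (Real.sqrt Real.pi)⁻¹ * ∫ x in Iic t, Real.exp (-x ^ 2))
    (T : EuclideanSpace ℝ (Fin n) × ℝ → EuclideanSpace ℝ (Fin n) × ℝ)
    (hT : ∀ y, T y = (((n : ℝ) + 1) / n) •
      ∫ u, φ ((inner ℝ y.1 (s u).1 : ℝ) + y.2 * (s u).2) • s u ∂Z)
    (C : Set (EuclideanSpace ℝ (Fin n) × ℝ))
    (hC : C = {z | 0 < z.2 ∧
      z.1 ∈ (-(z.2 * Real.sqrt n)) • interior (convexHull ℝ (msupp Z))}) :
    ∀ y, T y ∈ C := by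
  intro y
  have hsn1 : (0:ℝ) < Real.sqrt (n + 1) := Real.sqrt_pos.mpr (by positivity)
  set k : ℝ := 1 / Real.sqrt (n + 1) with hkdef
  set c0 : ℝ := Real.sqrt n / Real.sqrt (n + 1) with hc0def
  have hk : (0:ℝ) < k := by rw [hkdef]; positivity
  have hc0k : c0 = Real.sqrt n * k := by rw [hc0def, hkdef, mul_one_div]
  set ψ : EuclideanSpace ℝ (Fin n) → ℝ :=
    fun u => φ (-c0 * (inner ℝ y.1 u : ℝ) + y.2 * k) with hψdef
  have hψc : Continuous ψ := by
    apply hφc.comp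
    exact ((continuous_const.mul (continuous_const.inner continuous_id)).add continuous_const)
  have hψpos : ∀ u, 0 < ψ u := fun u => hφpos _
  have hint_eq : (fun u => φ ((inner ℝ y.1 (s u).1 : ℝ) + y.2 * (s u).2) • s u)
      = fun u => ((-c0) • (ψ u • u), ψ u * k) := by
    funext u
    rw [hs u]
    have hinner : (inner ℝ y.1 ((-c0) • u) : ℝ) = -c0 * (inner ℝ y.1 u : ℝ) :=
      real_inner_smul_right _ _ _
    simp only [hψdef, Prod.smul_mk, smul_eq_mul, hinner]
    rw [smul_comm]
  have hψint : Integrable ψ Z := integrable_of_continuous Z hsph ψ hψc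
  have hVint : Integrable (fun u => ψ u • u) Z :=
    integrable_of_continuous Z hsph _ (hψc.smul continuous_id)
  have hG1 : Integrable (fun u => (-c0) • (ψ u • u)) Z := hVint.smul (-c0)
  have hG2 : Integrable (fun u => ψ u * k) Z := hψint.mul_const _
  set I : ℝ := ∫ u, ψ u ∂Z with hIdef
  set V : EuclideanSpace ℝ (Fin n) := ∫ u, ψ u • u ∂Z with hVdef
  have hI : 0 < I := by
    rw [hIdef, integral_pos_iff_support_of_nonneg (fun u => (hψpos u).le) hψint]
    have hsupp : Function.support ψ = univ := by
      ext u; simp [Function.mem_support, (hψpos u).ne']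
    rw [hsupp]
    refine Measure.measure_univ_pos.mpr ?_
    intro h
    have hx := hiso (EuclideanSpace.single ⟨0, hn⟩ 1)
    rw [h] at hx
    simp [EuclideanSpace.norm_single] at hx
  have hTy : T y = (((n : ℝ) + 1) / n) • ((-c0) • V, I * k) := by
    rw [hT y, hint_eq, integral_pair hG1 hG2, integral_smul, integral_mul_const]
  have hnn : (0:ℝ) < ((n : ℝ) + 1) / n := by
    have : (0:ℝ) < (n:ℝ) := by exact_mod_cast hn
    positivity
  have hsnd : (T y).2 = (((n : ℝ) + 1) / n) * (I * k) := by
    rw [hTy, Prod.smul_snd, smul_eq_mul]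
  have hfst : (T y).1 = ((((n : ℝ) + 1) / n) * (-c0)) • V := by
    rw [hTy, Prod.smul_fst, smul_smul]
  rw [hC]
  refine ⟨by rw [hsnd]; positivity, ?_⟩
  have hbmem := barycenter_mem_interior Z hn hsph hiso hcent ψ hψc hψpos
  rw [← hIdef, ← hVdef] at hbmem
  have hTy1 : (T y).1 = (-((T y).2 * Real.sqrt n)) • (I⁻¹ • V) := by
    rw [hfst, hsnd, smul_smul]
    congr 1
    rw [hc0k]
    field_simp
  rw [hTy1]
  exact smul_mem_smul_set hbmem
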